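/- arXiv:2604.18377 — 2 statements merged into one kernel-verified Lean document; each statement's English description precedes it below -/
import Mathlib

section
/- Let Γ be a finite connected graph and let Pic⁰(Γ) be the kernel of the total degree homomorphism Pic(Γ) → ℤ. Then Pic⁰(Γ) is a finite abelian group. -/
open Finset

variable (V : Type) [Fintype V] [DecidableEq V]

/-- The twist multidegree at a vertex `v` of a multigraph with edge-multiplicity
function `E`: its value at `v` is minus the number of (non-loop) edges at `v`, and
its value at a neighbour `w ≠ v` is the number of edges between `v` and `w`
(loops contribute `0` in total). -/
def twistAt (E : V → V → ℕ) (v : V) : V → ℤ :=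
  fun w => if w = v then -(∑ u ∈ Finset.univ.erase v, (E v u : ℤ)) else (E v w : ℤ)

/-- The subgroup of `ℤ^{V}` generated by the twist multidegrees. -/
def TwistSubgroup (E : V → V → ℕ) : AddSubgroup (V → ℤ) :=
  AddSubgroup.closure (Set.range (twistAt V E))

/-- The Picard group `Pic(Γ) = ℤ^{V(Γ)}/Twist_Γ` of the multigraph. -/
abbrev Pic (E : V → V → ℕ) := (V → ℤ) ⧸ TwistSubgroup V E

/-- The subset of `Pic(Γ)` of classes of multidegrees of total degree `d`. -/
def PicDeg (E : V → V → ℕ) (d : ℤ) : Set (Pic V E) :=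
  {x | ∃ f : V → ℤ, (QuotientAddGroup.mk f : Pic V E) = x ∧ ∑ v, f v = d}

/-- Connectivity of the multigraph with edge multiplicity `E`. -/
def GraphConn (E : V → V → ℕ) : Prop :=
  ∀ u v : V, Relation.ReflTransGen (fun a b => 0 < E a b) u v

/-- Number of edges (loops counted once). -/
def numEdges (E : V → V → ℕ) : ℕ := ((∑ u, ∑ v, E u v) + ∑ v, E v v) / 2

/-- First Betti number `|E| - |V| + 1`, as an integer. -/
def betti1 (E : V → V → ℕ) : ℤ := (numEdges V E : ℤ) - Fintype.card V + 1

/-- Total genus `Σ_v g(v) + b₁(Γ)` of a multigraph with genus function `gv`. -/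
def totalGenus (E : V → V → ℕ) (gv : V → ℕ) : ℤ := (∑ v, (gv v : ℤ)) + betti1 V E

section Aux

variable {V : Type} [Fintype V] [DecidableEq V] (E : V → V → ℕ)

lemma twistAt_self (v : V) : twistAt V E v v = -(∑ u ∈ Finset.univ.erase v, (E v u : ℤ)) :=
  if_pos rfl

lemma twistAt_ne {v w : V} (h : w ≠ v) : twistAt V E v w = (E v w : ℤ) := if_neg h

lemma twistAt_row_sum (v : V) : ∑ w, twistAt V E v w = 0 := by
  rw [← Finset.add_sum_erase _ _ (Finset.mem_univ v), twistAt_self,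
    Finset.sum_congr rfl (fun w hw => twistAt_ne E (Finset.ne_of_mem_erase hw))]
  exact neg_add_cancel _

/-- The twist (Laplacian) map over `ℚ`. -/
noncomputable def twistLQ : (V → ℚ) →ₗ[ℚ] (V → ℚ) where
  toFun x := fun w => ∑ v, x v * ((twistAt V E v w : ℤ) : ℚ)
  map_add' x y := by funext w; simp [add_mul, Finset.sum_add_distrib]
  map_smul' c x := by funext w; simp [Finset.mul_sum, mul_assoc]

lemma twistLQ_apply (x : V → ℚ) (w : V) :
    twistLQ E x w = ∑ v, x v * ((twistAt V E v w : ℤ) : ℚ) := rfl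

lemma twistLQ_apply' (hsymm : ∀ u v, E u v = E v u) (x : V → ℚ) (w : V) :
    twistLQ E x w = ∑ u ∈ Finset.univ.erase w, (E w u : ℚ) * (x u - x w) := by
  have h1 : ∀ v ∈ Finset.univ.erase w,
      x v * ((twistAt V E v w : ℤ) : ℚ) = (E w v : ℚ) * x v := by
    intro v hv
    rw [twistAt_ne E (Finset.ne_of_mem_erase hv).symm, hsymm v w]
    push_cast
    ring
  rw [twistLQ_apply, ← Finset.add_sum_erase _ _ (Finset.mem_univ w), twistAt_self,
    Finset.sum_congr rfl h1]
  push_cast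
  simp only [mul_sub, Finset.sum_sub_distrib, ← Finset.sum_mul]
  ring

lemma twistLQ_ker_const (hsymm : ∀ u v, E u v = E v u) (hconn : GraphConn V E)
    {x : V → ℚ} (hx : twistLQ E x = 0) (v w : V) : x v = x w := by
  obtain ⟨v₀, -, hv₀⟩ := Finset.exists_max_image Finset.univ x ⟨v, Finset.mem_univ v⟩
  have hmax : ∀ u, x u ≤ x v₀ := fun u => hv₀ u (Finset.mem_univ u)
  have key : ∀ a b : V, x a = x v₀ → 0 < E a b → x b = x v₀ := by
    intro a b ha hab
    rcases eq_or_ne b a with rfl | hba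
    · exact ha
    · have h0 : ∑ u ∈ Finset.univ.erase a, (E a u : ℚ) * (x u - x a) = 0 := by
        rw [← twistLQ_apply' E hsymm, hx]
        rfl
      have hterm : ∀ u ∈ Finset.univ.erase a, (E a u : ℚ) * (x u - x a) ≤ 0 := by
        intro u _
        apply mul_nonpos_of_nonneg_of_nonpos (by positivity)
        rw [sub_nonpos, ha]
        exact hmax u
      have hb := (Finset.sum_eq_zero_iff_of_nonpos hterm).mp h0 b
        (Finset.mem_erase.mpr ⟨hba, Finset.mem_univ b⟩)
      have hEb : (0:ℚ) < E a b := by exact_mod_cast hab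
      have hxb : x b - x a = 0 := by
        rcases mul_eq_zero.mp hb with h | h
        · exact absurd h (ne_of_gt hEb)
        · exact h
      rw [sub_eq_zero] at hxb
      rw [hxb, ha]
  have main : ∀ u, x u = x v₀ := by
    intro u
    induction hconn v₀ u with
    | refl => rfl
    | tail _ hstep ih => exact key _ _ ih hstep
  rw [main v, main w]

lemma sum_twistLQ (x : V → ℚ) : ∑ w, twistLQ E x w = 0 := by
  simp only [twistLQ_apply]
  rw [Finset.sum_comm]
  apply Finset.sum_eq_zero
  intro v _
  rw [← Finset.mul_sum]
  have h : (∑ w, ((twistAt V E v w : ℤ) : ℚ)) = 0 := by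
    rw [← Int.cast_sum, twistAt_row_sum E v, Int.cast_zero]
  rw [h, mul_zero]

/-- The sum-of-coordinates linear functional over `ℚ`. -/
noncomputable def sumLQ : (V → ℚ) →ₗ[ℚ] ℚ where
  toFun x := ∑ v, x v
  map_add' x y := by simp [Finset.sum_add_distrib]
  map_smul' c x := by simp [Finset.mul_sum]

lemma range_twistLQ (hsymm : ∀ u v, E u v = E v u) (hconn : GraphConn V E) [Nonempty V] :
    LinearMap.range (twistLQ E) = LinearMap.ker (sumLQ (V := V)) := by
  have hle : LinearMap.range (twistLQ E) ≤ LinearMap.ker (sumLQ (V := V)) := by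
    rintro _ ⟨x, rfl⟩
    exact LinearMap.mem_ker.mpr (sum_twistLQ E x)
  refine Submodule.eq_of_le_of_finrank_le hle ?_
  have hcard : 0 < Fintype.card V := Fintype.card_pos
  have hone : (fun _ => 1 : V → ℚ) ≠ 0 := by
    intro h
    have := congrFun h (Classical.arbitrary V)
    simp at this
  have h1 : LinearMap.ker (twistLQ E) ≤ Submodule.span ℚ {(fun _ => 1 : V → ℚ)} := by
    intro x hx
    have hc := twistLQ_ker_const E hsymm hconn (LinearMap.mem_ker.mp hx)
    have hx1 : x = x (Classical.arbitrary V) • (fun _ => 1 : V → ℚ) := by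
      funext w
      simpa using (hc (Classical.arbitrary V) w).symm
    rw [hx1]
    exact Submodule.smul_mem _ _ (Submodule.mem_span_singleton_self _)
  have hker1 : Module.finrank ℚ (LinearMap.ker (twistLQ E)) ≤ 1 := by
    calc Module.finrank ℚ (LinearMap.ker (twistLQ E))
        ≤ Module.finrank ℚ (Submodule.span ℚ {(fun _ => 1 : V → ℚ)}) :=
          Submodule.finrank_mono h1
      _ = 1 := finrank_span_singleton hone
  have hrank := LinearMap.finrank_range_add_finrank_ker (twistLQ E)
  have hdim : Module.finrank ℚ (V → ℚ) = Fintype.card V := by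
    simp [Module.finrank_pi]
  have hsurj : LinearMap.range (sumLQ (V := V)) = ⊤ := by
    rw [LinearMap.range_eq_top]
    intro q
    exact ⟨Pi.single (Classical.arbitrary V) q, by simp [sumLQ]⟩
  have hker2 : Module.finrank ℚ (LinearMap.ker (sumLQ (V := V))) = Fintype.card V - 1 := by
    have h := LinearMap.finrank_range_add_finrank_ker (sumLQ (V := V))
    rw [hsurj, finrank_top, hdim] at h
    simp only [Module.finrank_self] at h
    omega
  rw [hdim] at hrank
  omega

lemma exists_nsmul_mem (hsymm : ∀ u v, E u v = E v u) (hconn : GraphConn V E)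
    (f : V → ℤ) (hf : ∑ v, f v = 0) :
    ∃ m : ℕ, 0 < m ∧ (m : ℤ) • f ∈ TwistSubgroup V E := by
  rcases isEmpty_or_nonempty V with h | h
  · refine ⟨1, one_pos, ?_⟩
    have hf0 : f = 0 := funext fun v => isEmptyElim v
    rw [hf0, smul_zero]
    exact (TwistSubgroup V E).zero_mem
  · have hfQ : (fun v => (f v : ℚ)) ∈ LinearMap.ker (sumLQ (V := V)) := by
      have : sumLQ (V := V) (fun v => (f v : ℚ)) = 0 := by
        show (∑ v, ((f v : ℤ) : ℚ)) = 0
        rw [← Int.cast_sum, hf, Int.cast_zero]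
      exact LinearMap.mem_ker.mpr this
    rw [← range_twistLQ E hsymm hconn] at hfQ
    obtain ⟨x, hx⟩ := hfQ
    set m : ℕ := ∏ v, (x v).den with hm
    have hmpos : 0 < m := Finset.prod_pos (fun v _ => (x v).pos)
    have hint : ∀ v : V, ∃ c : ℤ, (c : ℚ) = (m : ℚ) * x v := by
      intro v
      obtain ⟨k, hk⟩ := Finset.dvd_prod_of_mem (fun v => (x v).den) (Finset.mem_univ v)
      refine ⟨(x v).num * k, ?_⟩
      have hden : ((x v).den : ℚ) * x v = (x v).num := by
        rw [mul_comm, Rat.mul_den_eq_num]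
      have hmk : (m : ℚ) = ((x v).den : ℚ) * (k : ℚ) := by exact_mod_cast hk
      push_cast
      rw [hmk, mul_right_comm, hden]
    choose c hc using hint
    refine ⟨m, hmpos, ?_⟩
    have key : (m : ℤ) • f = ∑ v, c v • twistAt V E v := by
      funext w
      apply @Int.cast_injective ℚ _ _
      rw [Pi.smul_apply, Finset.sum_apply]
      simp only [Pi.smul_apply, smul_eq_mul]
      push_cast
      have step : ∑ v, ((c v : ℚ)) * ((twistAt V E v w : ℤ) : ℚ)
          = (m : ℚ) * ((f w : ℤ) : ℚ) := by
        rw [Finset.sum_congr rfl (fun v _ => by rw [hc v])]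
        simp only [mul_assoc]
        rw [← Finset.mul_sum, ← twistLQ_apply, congrFun hx w]
      rw [step]
    rw [key]
    exact AddSubgroup.sum_mem _ (fun v _ =>
      AddSubgroup.zsmul_mem _ (AddSubgroup.subset_closure (Set.mem_range_self v)) _)

end Aux

/-- The degree-0 Picard group `Pic⁰(Γ)` of a finite connected graph is finite
(it is an abelian group by construction, being the kernel of a homomorphism
between abelian groups). -/
theorem stmt5 (V : Type) [Fintype V] [DecidableEq V] (E : V → V → ℕ)
    (hsymm : ∀ u v, E u v = E v u) (hconn : GraphConn V E)
    (φ : Pic V E →+ ℤ)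
    (hφ : ∀ f : V → ℤ, φ (QuotientAddGroup.mk f) = ∑ v, f v) :
    Finite φ.ker := by
  have hNoeth : IsNoetherian ℤ (Pic V E) := by
    exact isNoetherian_of_surjective
      (QuotientAddGroup.mk' (TwistSubgroup V E)).toIntLinearMap
      (LinearMap.range_eq_top.mpr (QuotientAddGroup.mk'_surjective _))
  have hFG : AddGroup.FG φ.ker := by
    rw [AddGroup.fg_iff_addSubgroup_fg]
    have h1 : (AddSubgroup.toIntSubmodule φ.ker).FG := IsNoetherian.noetherian _
    rwa [Submodule.fg_iff_addSubgroup_fg, AddSubgroup.toIntSubmodule_toAddSubgroup] at h1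
  have htor : AddMonoid.IsTorsion φ.ker := by
    intro g
    obtain ⟨f, hfg⟩ := QuotientAddGroup.mk'_surjective (TwistSubgroup V E) (g : Pic V E)
    have hdeg : ∑ v, f v = 0 := by
      rw [← hφ f]
      have hg0 : φ ((g : Pic V E)) = 0 := g.2
      rw [show (QuotientAddGroup.mk f : Pic V E) = (g : Pic V E) from hfg]
      exact hg0
    obtain ⟨m, hm, hmem⟩ := exists_nsmul_mem E hsymm hconn f hdeg
    rw [isOfFinAddOrder_iff_nsmul_eq_zero]
    refine ⟨m, hm, ?_⟩
    have hsm : m • (g : Pic V E) = 0 := by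
      rw [← hfg, ← map_nsmul]
      rw [QuotientAddGroup.mk'_apply, QuotientAddGroup.eq_zero_iff]
      simpa [natCast_zsmul] using hmem
    exact Subtype.ext (by simpa using hsm)
  exact AddCommGroup.finite_of_fg_torsion _ htor
end

section
/- Let g ≥ 1, n ≥ 0 with 2g − 2 + n > 0, and let n₁, …, n_p be positive integers with n₁ + … + n_p = n. Let Γ be a finite connected graph with a genus function g: V(Γ) → ℕ and leg counts n_k(v) of legs labeled k at vertex v, with total genus g and Σ_v n_k(v) = n_k. Suppose d₁, d₂ ∈ ℤ both satisfy gcd(d_i − g + 1, 2g − 2, n₁, …, n_p) = 1. Then there exists an Aut(Γ)-equivariant bijection Pic^{d₁}(Γ) → Pic^{d₂}(Γ). -/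
open Finset

variable (V : Type) [Fintype V] [DecidableEq V]

lemma aux_span_twist {W : Type} [Fintype W] [DecidableEq W] (E : W → W → ℕ)
    (hconn : GraphConn W E) (f : W → ℚ) (hf : ∑ v, f v = 0) :
    f ∈ Submodule.span ℚ (Set.range (fun v => fun w => ((twistAt W E v w : ℤ) : ℚ))) := by
  classical
  rcases isEmpty_or_nonempty W with hW | hW
  · have : f = 0 := funext fun v => isEmptyElim v
    simp [this]
  by_contra hx
  obtain ⟨φ, hφf, hφbot⟩ := Submodule.exists_dual_map_eq_bot_of_notMem hx inferInstance
  set gq : W → ℚ := fun v => φ (fun j => if v = j then 1 else 0) with hgq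
  have hφ_eq : ∀ x : W → ℚ, φ x = ∑ v, x v * gq v := by
    intro x
    conv_lhs => rw [pi_eq_sum_univ x]
    rw [map_sum]
    refine Finset.sum_congr rfl fun v _ => ?_
    rw [map_smul, smul_eq_mul, hgq]
  have hφ0 : ∀ y ∈ Submodule.span ℚ
      (Set.range (fun v => fun w => ((twistAt W E v w : ℤ) : ℚ))), φ y = 0 := by
    intro y hy
    have : φ y ∈ Submodule.map φ (Submodule.span ℚ
        (Set.range (fun v => fun w => ((twistAt W E v w : ℤ) : ℚ)))) :=
      Submodule.mem_map_of_mem hy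
    rw [hφbot] at this
    exact (Submodule.mem_bot ℚ).mp this
  -- balance equations
  have hbal : ∀ v : W, ∑ u ∈ univ.erase v, (E v u : ℚ) * (gq u - gq v) = 0 := by
    intro v
    have h0 : φ (fun w => ((twistAt W E v w : ℤ) : ℚ)) = 0 :=
      hφ0 _ (Submodule.subset_span ⟨v, rfl⟩)
    rw [hφ_eq] at h0
    rw [← Finset.add_sum_erase _ _ (mem_univ v)] at h0
    have hvv : ((twistAt W E v v : ℤ) : ℚ) = -(∑ u ∈ univ.erase v, (E v u : ℚ)) := by
      simp [twistAt]
    have hvw : ∀ w ∈ univ.erase v, ((twistAt W E v w : ℤ) : ℚ) = (E v w : ℚ) := by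
      intro w hw
      have : w ≠ v := (Finset.mem_erase.mp hw).1
      simp [twistAt, this]
    rw [hvv] at h0
    have h0' : (-(∑ u ∈ univ.erase v, (E v u : ℚ))) * gq v
        + ∑ w ∈ univ.erase v, (E v w : ℚ) * gq w = 0 := by
      rw [← h0]
      congr 1
      exact Finset.sum_congr rfl fun w hw => by rw [hvw w hw]
    have hexp : ∑ u ∈ univ.erase v, (E v u : ℚ) * (gq u - gq v)
        = ∑ w ∈ univ.erase v, (E v w : ℚ) * gq w
          - (∑ u ∈ univ.erase v, (E v u : ℚ)) * gq v := by
      simp [mul_sub, Finset.sum_sub_distrib, Finset.sum_mul]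
      rw [sub_mul, Finset.sum_mul]
      ring
    rw [hexp]
    linarith [h0']
  -- maximum principle
  obtain ⟨v₀, -, hmax⟩ := Finset.exists_max_image (univ : Finset W) gq univ_nonempty
  have hconst : ∀ w : W, gq w = gq v₀ := by
    intro w
    have h := hconn v₀ w
    induction h with
    | refl => rfl
    | tail hr hstep ih =>
      rename_i b c
      by_cases hbc : c = b
      · rw [hbc]; exact ih
      · have hterm : ∀ u ∈ univ.erase b, (E b u : ℚ) * (gq u - gq b) ≤ 0 := by
          intro u _
          apply mul_nonpos_of_nonneg_of_nonpos (by positivity)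
          rw [sub_nonpos, ih]
          exact hmax u (mem_univ u)
        have := (Finset.sum_eq_zero_iff_of_nonpos hterm).mp (hbal b) c
          (Finset.mem_erase.mpr ⟨hbc, mem_univ c⟩)
        have hEbc : (E b c : ℚ) ≠ 0 := by
          have : (0:ℚ) < (E b c : ℚ) := by exact_mod_cast hstep
          exact this.ne'
        have := mul_eq_zero.mp this
        rcases this with h | h
        · exact absurd h hEbc
        · rw [sub_eq_zero] at h
          rw [h, ih]
  -- contradiction
  apply hφf
  rw [hφ_eq]
  have : ∀ v, f v * gq v = f v * gq v₀ := fun v => by rw [hconst v]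
  rw [Finset.sum_congr rfl (fun v _ => this v), ← Finset.sum_mul, hf, zero_mul]

lemma aux_exists_exponent {W : Type} [Fintype W] [DecidableEq W] (E : W → W → ℕ)
    (hconn : GraphConn W E) :
    ∃ N : ℕ, 0 < N ∧ ∀ f : W → ℤ, (∑ v, f v = 0) → (N:ℤ) • f ∈ TwistSubgroup W E := by
  classical
  have hvec : ∀ x : W → ℤ, (∑ v, x v = 0) →
      ∃ N : ℕ, 0 < N ∧ (N:ℤ) • x ∈ TwistSubgroup W E := by
    intro x hx
    have hsumQ : ∑ v, ((x v : ℚ)) = 0 := by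
      have : ((∑ v, x v : ℤ) : ℚ) = 0 := by rw [hx]; norm_num
      push_cast at this
      exact this
    have hfQ := aux_span_twist E hconn (fun v => (x v : ℚ)) hsumQ
    rw [Submodule.mem_span_range_iff_exists_fun] at hfQ
    obtain ⟨c, hc⟩ := hfQ
    set N : ℕ := ∏ v, (c v).den with hNdef
    have hN : 0 < N := Finset.prod_pos fun v _ => (c v).pos
    have ha : ∀ v : W, ∃ a : ℤ, (a : ℚ) = (N:ℚ) * c v := by
      intro v
      have hd : (c v).den ∣ N := Finset.dvd_prod_of_mem _ (mem_univ v)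
      obtain ⟨t, ht⟩ := hd
      refine ⟨(t:ℤ) * (c v).num, ?_⟩
      have hden0 : ((c v).den : ℚ) ≠ 0 := Nat.cast_ne_zero.mpr (c v).pos.ne'
      have hnum : ((c v).num : ℚ) = c v * ((c v).den : ℚ) :=
        (div_eq_iff hden0).mp (Rat.num_div_den (c v))
      push_cast
      rw [hnum, ht]
      push_cast
      ring
    choose a haQ using ha
    refine ⟨N, hN, ?_⟩
    have key : ((N:ℕ):ℤ) • x = ∑ v, a v • twistAt W E v := by
      funext w
      apply @Int.cast_injective ℚ _ _
      have hQ : (x w : ℚ) = ∑ v, c v * ((twistAt W E v w : ℤ) : ℚ) := by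
        have := congrFun hc w
        simp only [Finset.sum_apply, Pi.smul_apply, smul_eq_mul] at this
        exact this.symm
      have h2 : ((N:ℚ)) * (x w : ℚ) = ∑ v, (a v : ℚ) * ((twistAt W E v w : ℤ) : ℚ) := by
        rw [hQ, Finset.mul_sum]
        exact Finset.sum_congr rfl fun v _ => by rw [haQ v]; ring
      show ((((N:ℕ):ℤ) • x) w : ℚ) = (((∑ v, a v • twistAt W E v) w : ℤ) : ℚ)
      rw [Pi.smul_apply, smul_eq_mul, Finset.sum_apply]
      push_cast
      simpa using h2
    rw [key]
    exact AddSubgroup.sum_mem _ fun v _ =>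
      AddSubgroup.zsmul_mem _ (AddSubgroup.subset_closure (Set.mem_range_self v)) _
  rcases isEmpty_or_nonempty W with hW | hW
  · refine ⟨1, one_pos, fun f _ => ?_⟩
    have : f = 0 := funext fun v => isEmptyElim v
    rw [this, smul_zero]
    exact (TwistSubgroup W E).zero_mem
  obtain ⟨v₀⟩ := hW
  set bfun : W → W → ℤ := fun v w => (if w = v then 1 else 0) - (if w = v₀ then 1 else 0)
    with hbfun
  have hbsum : ∀ v, ∑ w, bfun v w = 0 := by
    intro v
    simp [hbfun, Finset.sum_sub_distrib]
  choose Nv hNv hmem using fun v => hvec (bfun v) (hbsum v)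
  refine ⟨∏ v, Nv v, Finset.prod_pos fun v _ => hNv v, ?_⟩
  intro f hf
  set Np : ℕ := ∏ v, Nv v with hNp
  have hNb : ∀ v, ((Np:ℕ):ℤ) • bfun v ∈ TwistSubgroup W E := by
    intro v
    have hd : Nv v ∣ Np := Finset.dvd_prod_of_mem Nv (mem_univ v)
    obtain ⟨t, ht⟩ := hd
    rw [ht]
    push_cast
    rw [mul_comm, mul_smul]
    exact AddSubgroup.zsmul_mem _ (hmem v) _
  have hdecomp : ((Np:ℕ):ℤ) • f = ∑ v, f v • (((Np:ℕ):ℤ) • bfun v) := by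
    funext w
    simp only [Pi.smul_apply, Finset.sum_apply, smul_eq_mul, hbfun]
    have hterm : ∀ v, f v * ((Np:ℤ) * ((if w = v then (1:ℤ) else 0) - if w = v₀ then 1 else 0))
        = (Np:ℤ) * (if w = v then f v else 0) - (Np:ℤ) * (if w = v₀ then f v else 0) := by
      intro v
      by_cases h1 : w = v <;> by_cases h2 : w = v₀ <;>
        split_ifs <;> ring
    rw [Finset.sum_congr rfl fun v _ => hterm v, Finset.sum_sub_distrib, ← Finset.mul_sum,
      ← Finset.mul_sum, Finset.sum_ite_eq, if_pos (mem_univ w)]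
    by_cases h2 : w = v₀
    · simp [h2, hf]
    · simp [h2]
  rw [hdecomp]
  exact AddSubgroup.sum_mem _ fun v _ => AddSubgroup.zsmul_mem _ (hNb v) _

def auxSumHom (W : Type) [Fintype W] [DecidableEq W] : (W → ℤ) →+ ℤ where
  toFun f := ∑ v, f v
  map_zero' := by simp
  map_add' f g := by simp [Finset.sum_add_distrib]

lemma aux_twist_sum {W : Type} [Fintype W] [DecidableEq W] (E : W → W → ℕ) (v : W) :
    ∑ w, twistAt W E v w = 0 := by
  rw [← Finset.add_sum_erase _ _ (mem_univ v)]
  have h1 : twistAt W E v v = -(∑ u ∈ univ.erase v, (E v u : ℤ)) := by simp [twistAt]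
  have h2 : ∀ w ∈ univ.erase v, twistAt W E v w = (E v w : ℤ) := fun w hw => by
    simp [twistAt, (Finset.mem_erase.mp hw).1]
  rw [h1, Finset.sum_congr rfl h2]
  ring

def auxDegHom (W : Type) [Fintype W] [DecidableEq W] (E : W → W → ℕ) : Pic W E →+ ℤ :=
  QuotientAddGroup.lift (TwistSubgroup W E) (auxSumHom W) (by
    intro x hx
    have hle : TwistSubgroup W E ≤ (auxSumHom W).ker :=
      (AddSubgroup.closure_le _).mpr (by
        rintro y ⟨v, rfl⟩
        simp only [SetLike.mem_coe, AddMonoidHom.mem_ker]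
        exact aux_twist_sum E v)
    exact hle hx)

lemma auxDegHom_mk {W : Type} [Fintype W] [DecidableEq W] (E : W → W → ℕ) (f : W → ℤ) :
    auxDegHom W E (QuotientAddGroup.mk f) = ∑ v, f v := rfl

lemma aux_mem_picDeg {W : Type} [Fintype W] [DecidableEq W] (E : W → W → ℕ) (d : ℤ)
    (x : Pic W E) : x ∈ PicDeg W E d ↔ auxDegHom W E x = d := by
  constructor
  · rintro ⟨f, rfl, hf⟩
    rw [auxDegHom_mk]; exact hf
  · intro hx
    obtain ⟨f, rfl⟩ := QuotientAddGroup.mk_surjective x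
    exact ⟨f, rfl, by rwa [auxDegHom_mk] at hx⟩

lemma aux_two_numEdges {W : Type} [Fintype W] [DecidableEq W] (E : W → W → ℕ)
    (hsymm : ∀ u v, E u v = E v u) :
    2 * numEdges W E = (∑ u, ∑ v, E u v) + ∑ v, E v v := by
  classical
  have heven : 2 ∣ (∑ u, ∑ v, E u v) + ∑ v, E v v := by
    letI : LinearOrder W := LinearOrder.lift' (Fintype.equivFin W) (Equiv.injective _)
    have hsplit : ∀ u : W, ∑ v, E u v
        = (∑ v ∈ univ.filter (fun v => v < u), E u v)
          + ((∑ v ∈ univ.filter (fun v => u < v), E u v) + E u u) := by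
      intro u
      rw [← Finset.sum_filter_add_sum_filter_not univ (fun v => v < u) (E u)]
      congr 1
      have hins : univ.filter (fun v => ¬ v < u) = insert u (univ.filter (fun v => u < v)) := by
        ext v
        simp only [mem_filter, mem_univ, true_and, mem_insert, not_lt]
        constructor
        · intro h
          rcases eq_or_lt_of_le h with h' | h'
          · exact Or.inl h'.symm
          · exact Or.inr h'
        · rintro (rfl | h)
          · exact le_refl _
          · exact h.le
      rw [hins, Finset.sum_insert (by simp), add_comm]
    have htot : (∑ u, ∑ v, E u v)
        = (∑ u, ∑ v ∈ univ.filter (fun v => v < u), E u v)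
          + ((∑ u, ∑ v ∈ univ.filter (fun v => u < v), E u v) + ∑ u, E u u) := by
      rw [Finset.sum_congr rfl fun u _ => hsplit u, Finset.sum_add_distrib,
        Finset.sum_add_distrib]
    have hC : (∑ u, ∑ v ∈ univ.filter (fun v => u < v), E u v)
        = ∑ u, ∑ v ∈ univ.filter (fun v => v < u), E u v := by
      calc (∑ u, ∑ v ∈ univ.filter (fun v => u < v), E u v)
          = ∑ y : W, ∑ x ∈ univ.filter (fun x => x < y), E x y :=
            Finset.sum_comm' (fun x y => by simp)
        _ = ∑ y : W, ∑ x ∈ univ.filter (fun x => x < y), E y x :=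
            Finset.sum_congr rfl fun y _ => Finset.sum_congr rfl fun x _ => hsymm x y
    rw [htot, hC]
    exact ⟨(∑ u, ∑ v ∈ univ.filter (fun v => v < u), E u v) + ∑ u, E u u, by ring⟩
  unfold numEdges
  exact Nat.mul_div_cancel' heven

lemma aux_dcan_sum {W : Type} [Fintype W] [DecidableEq W] (E : W → W → ℕ) (gv : W → ℕ)
    (hsymm : ∀ u v, E u v = E v u) :
    ∑ v, (2 * (gv v : ℤ) - 2 + (∑ u, (E v u : ℤ)) + (E v v : ℤ))
      = 2 * totalGenus W E gv - 2 := by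
  have h2e := aux_two_numEdges E hsymm
  have h2eZ : (2 : ℤ) * (numEdges W E : ℤ) = (∑ u, ∑ v, (E u v : ℤ)) + ∑ v, (E v v : ℤ) := by
    exact_mod_cast congrArg (fun n : ℕ => (n : ℤ)) h2e
  have hL : ∑ v, (2 * (gv v : ℤ) - 2 + (∑ u, (E v u : ℤ)) + (E v v : ℤ))
      = 2 * (∑ v, (gv v : ℤ)) - 2 * (Fintype.card W : ℤ)
        + ((∑ u, ∑ v, (E u v : ℤ)) + ∑ v, (E v v : ℤ)) := by
    rw [Finset.sum_add_distrib, Finset.sum_add_distrib, Finset.sum_sub_distrib,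
      ← Finset.mul_sum, Finset.sum_const, Finset.card_univ, nsmul_eq_mul]
    ring
  rw [hL, ← h2eZ]
  unfold totalGenus betti1
  ring

lemma aux_exists_coprime_shift (G : ℕ) (m₀ : ℤ) (hco : IsCoprime m₀ (G:ℤ)) (N : ℕ) (hN : 0 < N) :
    ∃ m : ℤ, (G:ℤ) ∣ (m - m₀) ∧ IsCoprime m (N:ℤ) := by
  classical
  set t : ℤ := ∏ p ∈ N.primeFactors.filter (fun q : ℕ => ¬ ((q:ℤ) ∣ m₀)), (p:ℤ) with ht
  refine ⟨m₀ + (G:ℤ) * t, ⟨t, by ring⟩, ?_⟩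
  rw [Int.isCoprime_iff_gcd_eq_one, Nat.eq_one_iff_not_exists_prime_dvd]
  intro p hp hdvd
  have hpZ : Prime (p:ℤ) := Nat.prime_iff_prime_int.mp hp
  have hgd : ((Int.gcd (m₀ + (G:ℤ)*t) (N:ℤ) : ℕ) : ℤ) ∣ (m₀ + (G:ℤ)*t) := Int.gcd_dvd_left _ _
  have hgd2 : ((Int.gcd (m₀ + (G:ℤ)*t) (N:ℤ) : ℕ) : ℤ) ∣ (N:ℤ) := Int.gcd_dvd_right _ _
  have hpm : (p:ℤ) ∣ m₀ + (G:ℤ)*t := dvd_trans (Int.natCast_dvd_natCast.mpr hdvd) hgd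
  have hpN : p ∣ N := Int.natCast_dvd_natCast.mp (dvd_trans (Int.natCast_dvd_natCast.mpr hdvd) hgd2)
  by_cases hm : (p:ℤ) ∣ m₀
  · have hpG : ¬ (p:ℤ) ∣ (G:ℤ) := by
      intro h
      obtain ⟨u, v, huv⟩ := hco
      have : (p:ℤ) ∣ 1 := huv ▸ dvd_add (Dvd.dvd.mul_left hm u) (Dvd.dvd.mul_left h v)
      exact hpZ.not_unit (isUnit_of_dvd_one this)
    have hpt : ¬ (p:ℤ) ∣ t := by
      rw [ht]
      rw [Prime.dvd_finset_prod_iff hpZ]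
      rintro ⟨q, hq, hdq⟩
      rw [mem_filter] at hq
      have hqp : q.Prime := (Nat.mem_primeFactors.mp hq.1).1
      have : p = q := by
        have := Int.natCast_dvd_natCast.mp hdq
        exact ((Nat.prime_dvd_prime_iff_eq hp hqp).mp this)
      exact hq.2 (this ▸ hm)
    have : (p:ℤ) ∣ (G:ℤ) * t := (dvd_add_right hm).mp hpm
    rcases hpZ.dvd_mul.mp this with h | h
    · exact hpG h
    · exact hpt h
  · have hmem : p ∈ N.primeFactors.filter (fun q : ℕ => ¬ ((q:ℤ) ∣ m₀)) := by
      rw [mem_filter, Nat.mem_primeFactors]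
      exact ⟨⟨hp, hpN, hN.ne'⟩, hm⟩
    have hpt : (p:ℤ) ∣ t := Finset.dvd_prod_of_mem _ hmem
    have : (p:ℤ) ∣ m₀ := (dvd_add_right (dvd_mul_of_dvd_right hpt _)).mp (by rwa [add_comm] at hpm)
    exact hm this


/-- Lemma `Lem:dmultiplication`: if `d₁, d₂` both satisfy
`gcd(dᵢ - g + 1, 2g - 2, n₁, …, n_p) = 1` then there is an `Aut(Γ)`-equivariant
bijection `Pic^{d₁}(Γ) → Pic^{d₂}(Γ)`. -/
theorem stmt11 (V : Type) [Fintype V] [DecidableEq V] (E : V → V → ℕ)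
    (hsymm : ∀ u v, E u v = E v u) (hconn : GraphConn V E)
    (gv : V → ℕ) (p : ℕ) (hp : 0 < p)
    (nl : Fin p → V → ℕ) (nk : Fin p → ℕ) (hnk : ∀ k, nk k = ∑ v, nl k v)
    (g n : ℤ) (hg : 1 ≤ g) (hn : 0 ≤ n) (hhyp : 0 < 2 * g - 2 + n)
    (hgΓ : totalGenus V E gv = g)
    (hnk' : (∑ k, (nk k : ℤ)) = n) (hpos : ∀ k, 0 < nk k)
    (d₁ d₂ : ℤ)
    (h₁ : Int.gcd (d₁ - g + 1)
      ((Int.gcd (2 * g - 2) ((Finset.univ.gcd nk : ℕ) : ℤ) : ℕ) : ℤ) = 1)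
    (h₂ : Int.gcd (d₂ - g + 1)
      ((Int.gcd (2 * g - 2) ((Finset.univ.gcd nk : ℕ) : ℤ) : ℕ) : ℤ) = 1) :
    ∃ F : Pic V E → Pic V E,
      Set.BijOn F (PicDeg V E d₁) (PicDeg V E d₂) ∧
      ∀ σ : Equiv.Perm V, (∀ u v, E (σ u) (σ v) = E u v) →
        (∀ v, gv (σ v) = gv v) → (∀ k v, nl k (σ v) = nl k v) →
        ∀ Φ : Pic V E →+ Pic V E,
          (∀ f : V → ℤ,
            Φ (QuotientAddGroup.mk f) = QuotientAddGroup.mk (fun v => f (σ.symm v))) →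
          ∀ x ∈ PicDeg V E d₁, F (Φ x) = Φ (F x) := by
  classical
  set D := auxDegHom V E with hD
  obtain ⟨Ne0, hNe0, hNexp⟩ := aux_exists_exponent E hconn
  have htor : ∀ x : Pic V E, D x = 0 → (Ne0:ℤ) • x = 0 := by
    intro x hx
    obtain ⟨f, rfl⟩ := QuotientAddGroup.mk_surjective x
    have hf : ∑ v, f v = 0 := by rwa [hD, auxDegHom_mk] at hx
    have hmem := hNexp f hf
    have hz : (QuotientAddGroup.mk ((Ne0:ℤ) • f) : Pic V E)
        = (Ne0:ℤ) • (QuotientAddGroup.mk f : Pic V E) :=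
      map_zsmul (QuotientAddGroup.mk' (TwistSubgroup V E)) (Ne0:ℤ) f
    rw [← hz]
    exact (QuotientAddGroup.eq_zero_iff _).mpr hmem
  -- gcd bookkeeping
  set Gn : ℕ := Int.gcd (2 * g - 2) ((Finset.univ.gcd nk : ℕ) : ℤ) with hGndef
  have hco1 : IsCoprime (d₁ - g + 1) ((Gn:ℕ):ℤ) := Int.isCoprime_iff_gcd_eq_one.mpr h₁
  have hco2 : IsCoprime (d₂ - g + 1) ((Gn:ℕ):ℤ) := Int.isCoprime_iff_gcd_eq_one.mpr h₂
  obtain ⟨a, b, hab⟩ := hco1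
  set m₀ : ℤ := (d₂ - g + 1) * a with hm₀def
  have hm₀e : ((Gn:ℕ):ℤ) ∣ m₀ * (d₁ - g + 1) - (d₂ - g + 1) := by
    refine ⟨-((d₂ - g + 1) * b), ?_⟩
    have h' : a * (d₁ - g + 1) = 1 - b * ((Gn:ℕ):ℤ) := by linarith [hab]
    calc m₀ * (d₁ - g + 1) - (d₂ - g + 1)
        = (d₂ - g + 1) * (a * (d₁ - g + 1)) - (d₂ - g + 1) := by ring
      _ = (d₂ - g + 1) * (1 - b * ((Gn:ℕ):ℤ)) - (d₂ - g + 1) := by rw [h']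
      _ = ((Gn:ℕ):ℤ) * -((d₂ - g + 1) * b) := by ring
  have hcoa : IsCoprime m₀ ((Gn:ℕ):ℤ) := by
    have h2' : IsCoprime a ((Gn:ℕ):ℤ) := ⟨d₁ - g + 1, b, by linarith [hab]⟩
    exact hco2.mul_left h2'
  obtain ⟨m, hmG, hmN⟩ := aux_exists_coprime_shift Gn m₀ hcoa (2 * Ne0) (by omega)
  have hcast2 : ((2 * Ne0 : ℕ):ℤ) = 2 * (Ne0:ℤ) := by push_cast; ring
  have hmN' : IsCoprime m ((Ne0:ℕ):ℤ) := by
    rw [hcast2] at hmN; exact hmN.of_mul_right_right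
  have hm2 : IsCoprime m 2 := by
    rw [hcast2] at hmN; exact hmN.of_mul_right_left
  have hmodd : 2 ∣ m - 1 := by
    rcases Int.even_or_odd m with he | ho
    · exfalso
      obtain ⟨u, w, huw⟩ := hm2
      obtain ⟨k, hk⟩ := he
      have : (2:ℤ) ∣ 1 := ⟨u * k + w, by rw [← huw, hk]; ring⟩
      norm_num at this
    · obtain ⟨k, hk⟩ := ho
      exact ⟨k, by omega⟩
  have hdiv : ((Gn:ℕ):ℤ) ∣ d₂ - m * d₁ := by
    have hG2 : ((Gn:ℕ):ℤ) ∣ 2 * g - 2 := by rw [hGndef]; exact Int.gcd_dvd_left _ _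
    have hd1 : ((Gn:ℕ):ℤ) ∣ m * (d₁ - g + 1) - (d₂ - g + 1) := by
      have hrw : m * (d₁ - g + 1) - (d₂ - g + 1)
          = (m - m₀) * (d₁ - g + 1) + (m₀ * (d₁ - g + 1) - (d₂ - g + 1)) := by ring
      rw [hrw]
      exact dvd_add (hmG.mul_right _) hm₀e
    have hd2 : ((Gn:ℕ):ℤ) ∣ (m - 1) * (g - 1) := by
      obtain ⟨k, hk⟩ := hmodd
      obtain ⟨j, hj⟩ := hG2
      exact ⟨k * j, by rw [hk]; linear_combination k * hj⟩
    have hrw2 : d₂ - m * d₁ = -(m * (d₁ - g + 1) - (d₂ - g + 1)) - (m - 1) * (g - 1) := by ring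
    rw [hrw2]
    exact dvd_sub (dvd_neg.mpr hd1) hd2
  -- invariant classes
  set dcan : V → ℤ := fun v => 2 * (gv v : ℤ) - 2 + (∑ u, (E v u : ℤ)) + (E v v : ℤ)
    with hdcandef
  set dk : Fin p → V → ℤ := fun k v => (nl k v : ℤ) with hdkdef
  have hdegcan : D (QuotientAddGroup.mk dcan) = 2 * g - 2 := by
    rw [hD, auxDegHom_mk, hdcandef]
    rw [aux_dcan_sum E gv hsymm, hgΓ]
  have hdegk : ∀ k, D (QuotientAddGroup.mk (dk k)) = (nk k : ℤ) := by
    intro k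
    rw [hD, auxDegHom_mk, hdkdef, hnk k]
    push_cast
    rfl
  set SA : Set (Pic V E) := insert (QuotientAddGroup.mk dcan)
    (Set.range (fun k => (QuotientAddGroup.mk (dk k) : Pic V E))) with hSAdef
  set A : AddSubgroup (Pic V E) := AddSubgroup.closure SA with hAdef
  have hmapA : A.map D = AddSubgroup.closure
      (insert (2 * g - 2) (Set.range (fun k => (nk k : ℤ)))) := by
    rw [hAdef, AddMonoidHom.map_closure]
    congr 1
    rw [hSAdef, Set.image_insert_eq, ← Set.range_comp]
    have hcomp : (⇑D ∘ fun k => (QuotientAddGroup.mk (dk k) : Pic V E))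
        = fun k => (nk k : ℤ) := funext fun k => hdegk k
    rw [hdegcan, hcomp]
  obtain ⟨h0, hh0⟩ := Int.subgroup_cyclic
    (AddSubgroup.closure (insert (2 * g - 2) (Set.range fun k => (nk k : ℤ))))
  have hdvd_iff : ∀ x : ℤ, x ∈ AddSubgroup.closure ({h0} : Set ℤ) ↔ h0 ∣ x := by
    intro x
    rw [← AddSubgroup.zmultiples_eq_closure]
    exact Int.mem_zmultiples_iff
  have hh0G : h0 ∣ ((Gn:ℕ):ℤ) := by
    have h2g : (2 * g - 2) ∈ AddSubgroup.closure
        (insert (2 * g - 2) (Set.range fun k => (nk k : ℤ))) :=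
      AddSubgroup.subset_closure (Set.mem_insert _ _)
    have hnkm : ∀ k, ((nk k : ℤ)) ∈ AddSubgroup.closure
        (insert (2 * g - 2) (Set.range fun k => (nk k : ℤ))) := fun k =>
      AddSubgroup.subset_closure (Set.mem_insert_of_mem _ (Set.mem_range_self k))
    have hd1 : h0 ∣ 2 * g - 2 := (hdvd_iff _).mp (hh0 ▸ h2g)
    have hd2 : ∀ k, h0 ∣ (nk k : ℤ) := fun k => (hdvd_iff _).mp (hh0 ▸ hnkm k)
    have hd3 : h0 ∣ ((Finset.univ.gcd nk : ℕ) : ℤ) := by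
      have hN : h0.natAbs ∣ Finset.univ.gcd nk := by
        refine Finset.dvd_gcd fun k _ => ?_
        have := Int.natAbs_dvd_natAbs.mpr (hd2 k)
        simpa using this
      exact Int.natAbs_dvd.mp (Int.natCast_dvd_natCast.mpr hN)
    rw [hGndef]
    exact Int.dvd_coe_gcd hd1 hd3
  have hc_mem : (d₂ - m * d₁) ∈ A.map D := by
    rw [hmapA, hh0]
    exact (hdvd_iff _).mpr (hh0G.trans hdiv)
  obtain ⟨c, hcA, hcD⟩ := AddSubgroup.mem_map.mp hc_mem
  -- base point
  have hVne : Nonempty V := by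
    by_contra h
    rw [not_nonempty_iff] at h
    have hk0 := hpos ⟨0, hp⟩
    rw [hnk ⟨0, hp⟩] at hk0
    simp at hk0
  obtain ⟨v₀⟩ := hVne
  set x₀ : Pic V E := QuotientAddGroup.mk (fun v => if v = v₀ then d₁ else 0) with hx₀def
  have hx₀D : D x₀ = d₁ := by
    rw [hx₀def, hD, auxDegHom_mk]
    simp
  obtain ⟨u, w, huw⟩ := hmN'
  refine ⟨fun x => m • x + c, ⟨?_, ?_, ?_⟩, ?_⟩
  · -- MapsTo
    intro x hx
    rw [aux_mem_picDeg] at hx ⊢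
    rw [map_add, map_zsmul, hcD, smul_eq_mul, hx]
    ring
  · -- InjOn
    intro x hx y hy hxy
    have hxy' : m • x + c = m • y + c := hxy
    have hcanc : m • x = m • y := add_right_cancel hxy'
    have hsub : m • (x - y) = 0 := by
      have hms : m • (x - y) = m • x - m • y := map_sub (zsmulAddGroupHom m) x y
      rw [hms, hcanc, sub_self]
    have hDt : D (x - y) = 0 := by
      rw [aux_mem_picDeg] at hx hy
      rw [map_sub, hx, hy, sub_self]
    have hNt := htor _ hDt
    have : x - y = 0 := by
      calc x - y = (1:ℤ) • (x - y) := (one_zsmul _).symm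
        _ = (u * m + w * (Ne0:ℤ)) • (x - y) := by rw [huw]
        _ = u • (m • (x - y)) + w • ((Ne0:ℤ) • (x - y)) := by
            rw [add_zsmul, mul_zsmul, mul_zsmul]
        _ = 0 := by rw [hsub, hNt, zsmul_zero, zsmul_zero, add_zero]
    exact sub_eq_zero.mp this
  · -- SurjOn
    intro y hy
    rw [aux_mem_picDeg] at hy
    set t : Pic V E := y - c - m • x₀ with htdef
    have hDt : D t = 0 := by
      rw [htdef, map_sub, map_sub, map_zsmul, hcD, hx₀D, hy, smul_eq_mul]
      ring
    have hNt := htor _ hDt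
    have hms : m • (u • t) = t := by
      calc m • (u • t) = (m * u) • t := by rw [mul_zsmul]
        _ = ((1:ℤ) - w * (Ne0:ℤ)) • t := by
            congr 1
            linarith [huw]
        _ = (1:ℤ) • t - w • ((Ne0:ℤ) • t) := by rw [sub_zsmul, mul_zsmul]; abel
        _ = t := by rw [hNt, zsmul_zero, sub_zero, one_zsmul]
    refine ⟨x₀ + u • t, ?_, ?_⟩
    · rw [aux_mem_picDeg, map_add, map_zsmul, hDt, hx₀D, smul_eq_mul, mul_zero, add_zero]
    · simp only
      have hadd : m • (x₀ + u • t) = m • x₀ + m • (u • t) := map_add (zsmulAddGroupHom m) _ _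
      rw [hadd, hms, htdef]
      abel
  · -- equivariance
    intro σ hE hgveq hnleq Φ hΦ x hx
    have hfix : Φ c = c := by
      have hdc : ∀ v, dcan (σ v) = dcan v := by
        intro v
        rw [hdcandef]
        simp only
        have hsum : ∑ u, (E (σ v) u : ℤ) = ∑ u, (E v u : ℤ) := by
          rw [← Equiv.sum_comp σ (fun u => (E (σ v) u : ℤ))]
          exact Finset.sum_congr rfl fun u _ => by rw [hE v u]
        rw [hgveq v, hsum, hE v v]
      have hdk' : ∀ k v, dk k (σ v) = dk k v := by
        intro k v
        rw [hdkdef]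
        simp only
        rw [hnleq k v]
      have hgen : ∀ z ∈ SA, Φ z = z := by
        intro z hz
        rw [hSAdef] at hz
        rcases hz with rfl | ⟨k, rfl⟩
        · rw [hΦ]
          congr 1
          funext v
          have h' := hdc (σ.symm v)
          rw [Equiv.apply_symm_apply] at h'
          exact h'.symm
        · rw [hΦ]
          congr 1
          funext v
          have h' := hdk' k (σ.symm v)
          rw [Equiv.apply_symm_apply] at h'
          exact h'.symm
      have hle : A ≤ AddMonoidHom.eqLocus Φ (AddMonoidHom.id _) := by
        rw [hAdef]
        refine (AddSubgroup.closure_le _).mpr ?_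
        intro z hz
        exact hgen z hz
      exact hle hcA
    simp only
    rw [map_add, map_zsmul, hfix]
end
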